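/- Let A_1, …, A_N be real n×n matrices, τ > 0 and m a positive integer, and suppose the bilinear matrix inequality conditions hold: there exist symmetric positive definite matrices P_{i,r}, scalars α_{irs} > 0, and scalars γ_{jqirs} ≥ 0 with Σ_{s=1}^m γ_{jqirs} < 1 such that A_i^T P_{i,r} + P_{i,r} A_i ≺ Σ_{s≠r} α_{irs} (P_{i,s} − P_{i,r}) for all i, r, and exp(A_i^T τ) P_{j,q} exp(A_i τ) ≺ P_{i,r} + Σ_{s≠r} γ_{jqirs} (P_{i,s} − P_{i,r}) for all i ≠ j and all q, r. Define V_i(x) = max_{1≤r≤m} x^T P_{i,r} x. Then along any trajectory given by a mode sequence i : ℕ → {1,…,N} with i(k+1) ≠ i(k), dwell times δ_k ≥ τ, and states x_{k+1} = exp(δ_k A_{i_k}) x_k with x_0 ≠ 0, the sequence of Lyapunov values at switching instants is strictly decreasing: V_{i_{k+1}}(x_{k+1}) < V_{i_k}(x_k) for all k. -/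

import Mathlib

open Matrix NormedSpace

section Aux
open Set Filter

/-- The quadratic form `M ↦ vᵀ M v` as a linear map in the matrix argument. -/
private def quadLM {n : ℕ} (v : Fin n → ℝ) : Matrix (Fin n) (Fin n) ℝ →ₗ[ℝ] ℝ where
  toFun M := v ⬝ᵥ M *ᵥ v
  map_add' M N := by simp [Matrix.add_mulVec, dotProduct_add]
  map_smul' c M := by simp [Matrix.smul_mulVec, dotProduct_smul]

private lemma exp_mulVec_ne_zero {n : ℕ} (B : Matrix (Fin n) (Fin n) ℝ) {x0 : Fin n → ℝ}
    (hx0 : x0 ≠ 0) : exp B *ᵥ x0 ≠ 0 := by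
  intro h
  apply hx0
  have hc : Commute (-B) B := (Commute.refl B).neg_left
  have h1 : exp (-B) * exp B = 1 := by
    rw [← Matrix.exp_add_of_commute _ _ hc, neg_add_cancel, NormedSpace.exp_zero]
  calc x0 = (exp (-B) * exp B) *ᵥ x0 := by rw [h1, Matrix.one_mulVec]
    _ = exp (-B) *ᵥ (exp B *ᵥ x0) := by rw [← Matrix.mulVec_mulVec]
    _ = 0 := by rw [h, Matrix.mulVec_zero]

section flowDeriv
attribute [local instance] Matrix.linftyOpNormedRing Matrix.linftyOpNormedAlgebra

private lemma hasDerivAt_flow {n : ℕ} (A : Matrix (Fin n) (Fin n) ℝ) (x0 : Fin n → ℝ) (t : ℝ) :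
    HasDerivAt (fun s : ℝ => exp (s • A) *ᵥ x0)
      (A *ᵥ (exp (t • A) *ᵥ x0)) t := by
  have hE : HasDerivAt (fun u : ℝ => exp (u • A)) (A * exp (t • A)) t :=
    hasDerivAt_exp_smul_const' A t
  let L : Matrix (Fin n) (Fin n) ℝ →ₗ[ℝ] (Fin n → ℝ) :=
    { toFun := fun M => M *ᵥ x0
      map_add' := fun M N => Matrix.add_mulVec M N x0
      map_smul' := fun c M => Matrix.smul_mulVec c M x0 }
  have := (LinearMap.toContinuousLinearMap L).hasFDerivAt.comp_hasDerivAt t hE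
  rw [Matrix.mulVec_mulVec]; exact this

private lemma hasDerivAt_quad {n : ℕ} (A P : Matrix (Fin n) (Fin n) ℝ) (x0 : Fin n → ℝ) (t : ℝ) :
    HasDerivAt (fun s : ℝ => (exp (s • A) *ᵥ x0) ⬝ᵥ P *ᵥ (exp (s • A) *ᵥ x0))
      ((exp (t • A) *ᵥ x0) ⬝ᵥ (Aᵀ * P + P * A) *ᵥ (exp (t • A) *ᵥ x0)) t := by
  set y : ℝ → (Fin n → ℝ) := fun s => exp (s • A) *ᵥ x0 with hy_def
  have hy : HasDerivAt y (A *ᵥ y t) t := hasDerivAt_flow A x0 t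
  have hyc : ∀ i, HasDerivAt (fun s => y s i) ((A *ᵥ y t) i) t := fun i => by
    have := (ContinuousLinearMap.proj (R := ℝ)
      (φ := fun _ : Fin n => ℝ) i).hasFDerivAt.comp_hasDerivAt t hy
    simpa [Function.comp_def] using this
  have key : HasDerivAt (fun s : ℝ => ∑ i, ∑ j, y s i * (P i j * y s j))
      (∑ i, ∑ j, ((A *ᵥ y t) i * (P i j * y t j) + y t i * (P i j * (A *ᵥ y t) j))) t := by
    apply HasDerivAt.fun_sum; intro i _
    apply HasDerivAt.fun_sum; intro j _
    simpa [mul_comm, mul_left_comm, mul_assoc] using (hyc i).fun_mul ((hyc j).const_mul (P i j))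
  have e1 : ∀ v : Fin n → ℝ, v ⬝ᵥ P *ᵥ v = ∑ i, ∑ j, v i * (P i j * v j) := by
    intro v; simp [dotProduct, Matrix.mulVec, Finset.mul_sum]
  have e2 : (∑ i, ∑ j, ((A *ᵥ y t) i * (P i j * y t j) + y t i * (P i j * (A *ᵥ y t) j)))
      = (A *ᵥ y t) ⬝ᵥ P *ᵥ y t + y t ⬝ᵥ P *ᵥ (A *ᵥ y t) := by
    simp [dotProduct, Matrix.mulVec, Finset.mul_sum, Finset.sum_add_distrib]
  have e3 : (A *ᵥ y t) ⬝ᵥ P *ᵥ y t + y t ⬝ᵥ P *ᵥ (A *ᵥ y t) = y t ⬝ᵥ (Aᵀ * P + P * A) *ᵥ y t := by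
    rw [Matrix.add_mulVec, dotProduct_add, ← Matrix.mulVec_mulVec, ← Matrix.mulVec_mulVec]
    congr 1
    rw [← Matrix.vecMul_transpose, ← dotProduct_mulVec]
  rw [← e3, ← e2]
  have : (fun s : ℝ => y s ⬝ᵥ P *ᵥ y s) = fun s : ℝ => ∑ i, ∑ j, y s i * (P i j * y s j) := by
    funext s; exact e1 (y s)
  exact this ▸ key

end flowDeriv

end Aux

/-- The piece-wise quadratic function `V(x) = max_{1 ≤ r ≤ m} xᵀ P_r x`. -/
noncomputable def pwMax {n m : ℕ} (hm : 0 < m)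
    (P : Fin m → Matrix (Fin n) (Fin n) ℝ) (x : Fin n → ℝ) : ℝ :=
  Finset.univ.sup' (Finset.univ_nonempty_iff.mpr ⟨⟨0, hm⟩⟩)
    (fun r : Fin m => x ⬝ᵥ P r *ᵥ x)

open Set Filter in
/-- Along the flow of a single mode, `pwMax` does not increase. -/
private lemma pwMax_flow_le {n m : ℕ} (hm : 0 < m) (A : Matrix (Fin n) (Fin n) ℝ)
    (P : Fin m → Matrix (Fin n) (Fin n) ℝ) (α : Fin m → Fin m → ℝ)
    (hα : ∀ r s, 0 < α r s)
    (hder : ∀ r, ((∑ s ∈ Finset.univ.erase r, α r s • (P s - P r)) -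
      (Aᵀ * P r + P r * A)).PosDef)
    {x0 : Fin n → ℝ} (hx0 : x0 ≠ 0) {b : ℝ} (hb : 0 ≤ b) :
    pwMax hm P (exp (b • A) *ᵥ x0) ≤ pwMax hm P x0 := by
  have hne : (Finset.univ : Finset (Fin m)).Nonempty := Finset.univ_nonempty_iff.mpr ⟨⟨0, hm⟩⟩
  set y : ℝ → (Fin n → ℝ) := fun s => exp (s • A) *ᵥ x0 with hy_def
  set F : ℝ → Fin m → ℝ := fun t r => y t ⬝ᵥ P r *ᵥ y t with hF_def
  set f : ℝ → ℝ := fun t => Finset.univ.sup' hne (F t) with hf_def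
  set D : ℝ → Fin m → ℝ := fun t r => y t ⬝ᵥ (Aᵀ * P r + P r * A) *ᵥ y t with hD_def
  have hFd : ∀ r t, HasDerivAt (fun s => F s r) (D t r) t := fun r t => hasDerivAt_quad A (P r) x0 t
  have hy0 : ∀ t, y t ≠ 0 := fun t => exp_mulVec_ne_zero _ hx0
  -- the strict derivative bound
  have hquad : ∀ t r, D t r < ∑ s ∈ Finset.univ.erase r, α r s * (F t s - F t r) := by
    intro t r
    have h := (hder r).dotProduct_mulVec_pos (hy0 t)
    rw [star_trivial] at h
    have := (quadLM (y t)).map_sub (∑ s ∈ Finset.univ.erase r, α r s • (P s - P r))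
      (Aᵀ * P r + P r * A)
    have hsum : quadLM (y t) (∑ s ∈ Finset.univ.erase r, α r s • (P s - P r))
        = ∑ s ∈ Finset.univ.erase r, α r s * (F t s - F t r) := by
      rw [map_sum]
      refine Finset.sum_congr rfl fun s _ => ?_
      rw [LinearMap.map_smul]
      have : quadLM (y t) (P s - P r) = F t s - F t r := (quadLM (y t)).map_sub (P s) (P r)
      rw [this]; rfl
    have hD' : quadLM (y t) (Aᵀ * P r + P r * A) = D t r := rfl
    have h0 : (0:ℝ) < ∑ s ∈ Finset.univ.erase r, α r s * (F t s - F t r) - D t r := by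
      rw [← hsum, ← hD', ← this]; exact h
    linarith
  -- active set
  set act : ℝ → Finset (Fin m) := fun t => Finset.univ.filter (fun r => F t r = f t) with hact_def
  have hact : ∀ t, (act t).Nonempty := by
    intro t
    obtain ⟨r, _, hr⟩ := Finset.exists_mem_eq_sup' hne (F t)
    exact ⟨r, by simp [hact_def, hf_def, hr.symm]⟩
  set f' : ℝ → ℝ := fun t => (act t).sup' (hact t) (D t) with hf'_def
  have hmemact : ∀ {t r}, r ∈ act t → F t r = f t := by
    intro t r hr; exact (Finset.mem_filter.1 hr).2
  have hle : ∀ t s, F t s ≤ f t := fun t s => Finset.le_sup' (F t) (Finset.mem_univ s)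
  -- f' is negative
  have hf'neg : ∀ t, f' t < 0 := by
    intro t
    rw [hf'_def]
    rw [Finset.sup'_lt_iff]
    intro r hr
    refine lt_of_lt_of_le (hquad t r) (Finset.sum_nonpos fun s hs => ?_)
    have h1 : F t s ≤ F t r := (hle t s).trans_eq (hmemact hr).symm
    exact mul_nonpos_of_nonneg_of_nonpos (hα r s).le (by linarith)
  -- continuity
  have hFcont : ∀ r, Continuous (fun t => F t r) := fun r =>
    continuous_iff_continuousAt.2 fun t => (hFd r t).continuousAt
  have hfcont : Continuous f := by
    rw [continuous_iff_continuousAt]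
    intro t
    exact ContinuousAt.finset_sup'_apply hne fun r _ => (hFcont r).continuousAt
  -- slope condition
  have hf' : ∀ t ∈ Ico 0 b, ∀ r, f' t < r → ∃ᶠ z in nhdsWithin t (Ioi t), slope f t z < r := by
    intro t _ r hr
    apply Filter.Eventually.frequently
    obtain ⟨s₀, hs₀⟩ := hact t
    have hev1 : ∀ s, s ∈ act t → ∀ᶠ z in nhdsWithin t (Ioi t), slope (fun u => F u s) t z < r := by
      intro s hs
      have hD : D t s < r := lt_of_le_of_lt (Finset.le_sup' (D t) hs) hr
      have h2 : ∀ᶠ z in nhdsWithin t {t}ᶜ, slope (fun u => F u s) t z < r :=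
        (hasDerivAt_iff_tendsto_slope.1 (hFd s t)).eventually_lt_const hD
      exact h2.filter_mono (nhdsWithin_mono t fun z hz => ne_of_gt hz)
    have hev2 : ∀ s, s ∉ act t → ∀ᶠ z in nhdsWithin t (Ioi t), F z s < F z s₀ := by
      intro s hs
      have hlt : F t s < F t s₀ := by
        rcases lt_or_eq_of_le (hle t s) with h | h
        · exact h.trans_eq (hmemact hs₀).symm
        · exact absurd (by simp [hact_def, h]) hs
      have : ∀ᶠ z in nhds t, F z s < F z s₀ :=
        ((hFcont s).continuousAt (x := t)).eventually_lt ((hFcont s₀).continuousAt) hlt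
      exact this.filter_mono nhdsWithin_le_nhds
    have hall : ∀ᶠ z in nhdsWithin t (Ioi t),
        (∀ s, (s ∈ act t → slope (fun u => F u s) t z < r) ∧ (s ∉ act t → F z s < F z s₀)) := by
      rw [eventually_all]
      intro s
      by_cases hs : s ∈ act t
      · exact (hev1 s hs).mono fun z hz => ⟨fun _ => hz, fun h => absurd hs h⟩
      · exact (hev2 s hs).mono fun z hz => ⟨fun h => absurd h hs, fun _ => hz⟩
    refine hall.mono fun z hz => ?_
    obtain ⟨σ, _, hσ⟩ := Finset.exists_mem_eq_sup' hne (F z)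
    have hσact : σ ∈ act t := by
      by_contra hσn
      have h1 : F z σ < F z s₀ := (hz σ).2 hσn
      have h2 : F z s₀ ≤ f z := hle z s₀
      rw [show f z = F z σ from hσ] at h2
      linarith
    have heq : slope f t z = slope (fun u => F u σ) t z := by
      simp only [slope_def_field]
      rw [show f z = F z σ from hσ, hmemact hσact]
    rw [heq]
    exact (hz σ).1 hσact
  -- apply the fencing theorem
  have key : ∀ ⦃x⦄, x ∈ Icc 0 b → f x ≤ f 0 := by
    have := image_le_of_liminf_slope_right_lt_deriv_boundary (f := f) (f' := f')
      (a := 0) (b := b) (hfcont.continuousOn) hf' (B := fun _ => f 0) (B' := fun _ => 0)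
      le_rfl (fun x => hasDerivAt_const x (f 0)) (fun x _ _ => hf'neg x)
    exact this
  have hfb := key ⟨hb, le_rfl⟩
  have h0 : f 0 = pwMax hm P x0 := by
    have : y 0 = x0 := by rw [hy_def]; simp [NormedSpace.exp_zero, Matrix.one_mulVec]
    rw [hf_def]
    simp only [hF_def, this]
    rfl
  have hb' : f b = pwMax hm P (exp (b • A) *ᵥ x0) := rfl
  rw [← hb', ← h0]; exact hfb

/-- At a switching instant (after exactly time `τ` in the current mode), `pwMax`
strictly decreases. -/
private lemma pwMax_jump_lt {n m : ℕ} (hm : 0 < m) (A : Matrix (Fin n) (Fin n) ℝ) (τ : ℝ)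
    (Pi' Pj : Fin m → Matrix (Fin n) (Fin n) ℝ) (γ : Fin m → Fin m → Fin m → ℝ)
    (hγ : ∀ q r s, 0 ≤ γ q r s)
    (hjump : ∀ q r, ((Pi' r + ∑ s ∈ Finset.univ.erase r, γ q r s • (Pi' s - Pi' r)) -
        (exp (τ • Aᵀ) * Pj q * exp (τ • A))).PosDef)
    {x : Fin n → ℝ} (hx : x ≠ 0) :
    pwMax hm Pj (exp (τ • A) *ᵥ x) < pwMax hm Pi' x := by
  have hne : (Finset.univ : Finset (Fin m)).Nonempty := Finset.univ_nonempty_iff.mpr ⟨⟨0, hm⟩⟩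
  set E := exp (τ • A) with hE_def
  obtain ⟨r, _, hr⟩ := Finset.exists_mem_eq_sup' hne (fun r => x ⬝ᵥ Pi' r *ᵥ x)
  have hrmax : ∀ s, x ⬝ᵥ Pi' s *ᵥ x ≤ x ⬝ᵥ Pi' r *ᵥ x := fun s =>
    hr ▸ Finset.le_sup' (fun r => x ⬝ᵥ Pi' r *ᵥ x) (Finset.mem_univ s)
  rw [pwMax, pwMax, Finset.sup'_lt_iff]
  intro q _
  have h := (hjump q r).dotProduct_mulVec_pos hx
  rw [star_trivial] at h
  have hexpT : exp (τ • Aᵀ) = Eᵀ := by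
    rw [hE_def, ← Matrix.transpose_smul, Matrix.exp_transpose]
  rw [hexpT] at h
  have hq1 : quadLM x ((Pi' r + ∑ s ∈ Finset.univ.erase r, γ q r s • (Pi' s - Pi' r)) -
      (Eᵀ * Pj q * E)) = (x ⬝ᵥ Pi' r *ᵥ x +
        ∑ s ∈ Finset.univ.erase r, γ q r s * (x ⬝ᵥ Pi' s *ᵥ x - x ⬝ᵥ Pi' r *ᵥ x)) -
      quadLM x (Eᵀ * Pj q * E) := by
    rw [map_sub, map_add, map_sum]
    congr 2
    refine Finset.sum_congr rfl fun s _ => ?_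
    rw [LinearMap.map_smul, (quadLM x).map_sub]
    rfl
  have hq2 : quadLM x (Eᵀ * Pj q * E) = (E *ᵥ x) ⬝ᵥ Pj q *ᵥ (E *ᵥ x) := by
    show x ⬝ᵥ (Eᵀ * Pj q * E) *ᵥ x = _
    rw [← Matrix.mulVec_mulVec, ← Matrix.mulVec_mulVec, dotProduct_mulVec,
      Matrix.vecMul_transpose]
  have hsum : ∑ s ∈ Finset.univ.erase r, γ q r s * (x ⬝ᵥ Pi' s *ᵥ x - x ⬝ᵥ Pi' r *ᵥ x) ≤ 0 :=
    Finset.sum_nonpos fun s _ => mul_nonpos_of_nonneg_of_nonpos (hγ q r s)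
      (by linarith [hrmax s])
  have h' : 0 < quadLM x ((Pi' r + ∑ s ∈ Finset.univ.erase r, γ q r s • (Pi' s - Pi' r)) -
      (Eᵀ * Pj q * E)) := h
  rw [hq1, hq2] at h'
  calc (E *ᵥ x) ⬝ᵥ Pj q *ᵥ (E *ᵥ x)
      < x ⬝ᵥ Pi' r *ᵥ x + ∑ s ∈ Finset.univ.erase r, γ q r s *
        (x ⬝ᵥ Pi' s *ᵥ x - x ⬝ᵥ Pi' r *ᵥ x) := by linarith
    _ ≤ x ⬝ᵥ Pi' r *ᵥ x := by linarith
    _ = Finset.univ.sup' hne (fun r => x ⬝ᵥ Pi' r *ᵥ x) := hr.symm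

/-- under the BMI dwell-time conditions, along any dwell-time-`τ`
switching trajectory starting from a nonzero state, the sequence of Lyapunov values
at switching instants is strictly decreasing. -/
theorem pwMax_strictly_decreasing_at_switching_instants
    (n N m : ℕ) (hm : 0 < m) (A : Fin N → Matrix (Fin n) (Fin n) ℝ)
    (τ : ℝ) (hτ : 0 < τ)
    (P : Fin N → Fin m → Matrix (Fin n) (Fin n) ℝ)
    (α : Fin N → Fin m → Fin m → ℝ)
    (γ : Fin N → Fin m → Fin N → Fin m → Fin m → ℝ)
    (hPsymm : ∀ i r, (P i r).IsSymm)
    (hPpos : ∀ i r, (P i r).PosDef)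
    (hα : ∀ i r s, 0 < α i r s)
    (hγ : ∀ j q i r s, 0 ≤ γ j q i r s)
    (hγsum : ∀ j q i r, ∑ s, γ j q i r s < 1)
    (hder : ∀ i r,
      ((∑ s ∈ Finset.univ.erase r, α i r s • (P i s - P i r)) -
        ((A i)ᵀ * P i r + P i r * A i)).PosDef)
    (hjump : ∀ i j, i ≠ j → ∀ q r,
      ((P i r + ∑ s ∈ Finset.univ.erase r, γ j q i r s • (P i s - P i r)) -
        (exp (τ • (A i)ᵀ) * P j q * exp (τ • A i))).PosDef) :
    ∀ (σ : ℕ → Fin N), (∀ k, σ (k + 1) ≠ σ k) →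
    ∀ (δ : ℕ → ℝ), (∀ k, τ ≤ δ k) →
    ∀ (x : ℕ → Fin n → ℝ), (∀ k, x (k + 1) = exp (δ k • A (σ k)) *ᵥ x k) →
    x 0 ≠ 0 →
    ∀ k : ℕ, pwMax hm (P (σ (k + 1))) (x (k + 1)) < pwMax hm (P (σ k)) (x k) := by
  intro σ hσ δ hδ x hx hx0 k
  have hxne : ∀ k, x k ≠ 0 := by
    intro k
    induction k with
    | zero => exact hx0
    | succ k ih =>
      rw [hx k]
      exact exp_mulVec_ne_zero _ ih
  set i := σ k with hi_def
  set j := σ (k + 1) with hj_def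
  have hs : 0 ≤ δ k - τ := by linarith [hδ k]
  have hsplit : exp (δ k • A i) = exp (τ • A i) * exp ((δ k - τ) • A i) := by
    rw [← Matrix.exp_add_of_commute _ _ (((Commute.refl (A i)).smul_left τ).smul_right _),
      ← add_smul]
    norm_num
  have hxsplit : x (k + 1) = exp (τ • A i) *ᵥ (exp ((δ k - τ) • A i) *ᵥ x k) := by
    rw [hx k, ← hi_def, hsplit, ← Matrix.mulVec_mulVec]
  set w : Fin n → ℝ := exp ((δ k - τ) • A i) *ᵥ x k with hw_def
  have hwne : w ≠ 0 := exp_mulVec_ne_zero _ (hxne k)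
  have step1 : pwMax hm (P j) (x (k + 1)) < pwMax hm (P i) w := by
    rw [hxsplit]
    exact pwMax_jump_lt hm (A i) τ (P i) (P j) (fun q r s => γ j q i r s)
      (fun q r s => hγ j q i r s) (hjump i j (Ne.symm (hσ k))) hwne
  have step2 : pwMax hm (P i) w ≤ pwMax hm (P i) (x k) :=
    pwMax_flow_le hm (A i) (P i) (α i) (hα i) (hder i) (hxne k) hs
  exact lt_of_lt_of_le step1 step2
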